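/- Let N ≥ 3, γ < N, and α ∈ (0, min{k, γ}), where K ⊂ ℝ^N is a compact C² submanifold of codimension k (1 ≤ k ≤ N) contained in the boundary of a bounded C² domain Ω, and d_K(y) = dist(y,K). Then there exists C = C(α, γ, Ω, K) > 0 such that sup_{x ∈ Ω} ∫_Ω |x-y|^{-N+γ} d_K(y)^{-α} dy ≤ C. -/

import Mathlib

set_option maxHeartbeats 1000000

open MeasureTheory Metric Set ENNReal

lemma pow_rpow_comm {x : ℝ} (hx : 0 ≤ x) (p : ℝ) (j : ℕ) : ((x ^ j) ^ p : ℝ) = (x ^ p) ^ j := by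
  rw [← Real.rpow_natCast x j, ← Real.rpow_natCast (x ^ p) j, ← Real.rpow_mul hx,
    ← Real.rpow_mul hx, mul_comm]

lemma dyadic_bound {X : Type*} [MetricSpace X] [MeasurableSpace X] (μ : Measure X)
    (f : X → ℝ≥0∞) (x0 : X) (S : Set X) {D : ℝ} (hD : 0 < D)
    (hS : ∀ y ∈ S, dist y x0 ≤ D) (hx0 : μ {x0} = 0)
    (A q : ℝ≥0∞)
    (hj : ∀ j : ℕ, ∫⁻ y in S ∩ {y | D * (2⁻¹ : ℝ) ^ (j + 1) < dist y x0 ∧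
        dist y x0 ≤ D * (2⁻¹ : ℝ) ^ j}, f y ∂μ ≤ A * q ^ j) :
    ∫⁻ y in S, f y ∂μ ≤ A * (1 - q)⁻¹ := by
  classical
  set ann : ℕ → Set X := fun j => {y | D * (2⁻¹ : ℝ) ^ (j + 1) < dist y x0 ∧
      dist y x0 ≤ D * (2⁻¹ : ℝ) ^ j} with hann
  have hcover : S ⊆ {x0} ∪ ⋃ j, S ∩ ann j := by
    intro y hy
    rcases eq_or_ne y x0 with h | h
    · exact Or.inl (by simp [h])
    · refine Or.inr ?_
      have hd0 : 0 < dist y x0 := dist_pos.2 h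
      have hdD : dist y x0 ≤ D := hS y hy
      have hP : ∃ n : ℕ, D * (2⁻¹ : ℝ) ^ n < dist y x0 := by
        obtain ⟨n, hn⟩ : ∃ n : ℕ, (2⁻¹ : ℝ) ^ n < dist y x0 / D :=
          exists_pow_lt_of_lt_one (div_pos hd0 hD) (by norm_num)
        exact ⟨n, by rwa [lt_div_iff₀' hD] at hn⟩
      have hm := Nat.find_spec hP
      have hm0 : Nat.find hP ≠ 0 := by
        intro h0
        rw [h0] at hm
        simp only [pow_zero, mul_one] at hm
        linarith
      obtain ⟨j, hj'⟩ := Nat.exists_eq_succ_of_ne_zero hm0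
      have hnot : ¬ D * (2⁻¹ : ℝ) ^ j < dist y x0 := Nat.find_min hP (by omega)
      rw [hj'] at hm
      exact mem_iUnion.2 ⟨j, hy, hm, not_lt.1 hnot⟩
  calc ∫⁻ y in S, f y ∂μ ≤ ∫⁻ y in {x0} ∪ ⋃ j, S ∩ ann j, f y ∂μ :=
        lintegral_mono_set hcover
    _ ≤ ∫⁻ y in {x0}, f y ∂μ + ∫⁻ y in ⋃ j, S ∩ ann j, f y ∂μ := lintegral_union_le _ _ _
    _ ≤ 0 + ∑' j, ∫⁻ y in S ∩ ann j, f y ∂μ := by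
        gcongr
        · exact le_of_eq (setLIntegral_measure_zero _ _ hx0)
        · exact lintegral_iUnion_le _ _
    _ ≤ 0 + ∑' j, A * q ^ j := by
        gcongr with j
        exact hj j
    _ = A * (1 - q)⁻¹ := by rw [zero_add, ENNReal.tsum_mul_left, ENNReal.tsum_geometric]

lemma ennreal_rpow_anti {a b : ℝ≥0∞} (hab : a ≤ b) {p : ℝ} (hp : p ≤ 0) : b ^ p ≤ a ^ p := by
  rw [← neg_neg p, ENNReal.rpow_neg b, ENNReal.rpow_neg a]
  exact ENNReal.inv_le_inv.2 (ENNReal.rpow_le_rpow hab (neg_nonneg.2 hp))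

lemma lintegral_ball_rpow_neg {k : ℕ} (hk : 1 ≤ k) {α : ℝ} (hα0 : 0 < α) (hαk : α < k) :
    ∃ κ : ℝ, 0 < κ ∧ ∀ R : ℝ, 0 < R →
      ∫⁻ u in closedBall (0 : EuclideanSpace ℝ (Fin k)) R, (ENNReal.ofReal ‖u‖) ^ (-α)
        ≤ ENNReal.ofReal (κ * R ^ ((k : ℝ) - α)) := by
  haveI : Nonempty (Fin k) := ⟨⟨0, hk⟩⟩
  haveI : Nontrivial (EuclideanSpace ℝ (Fin k)) :=
    inferInstanceAs (Nontrivial (PiLp 2 fun _ : Fin k => ℝ))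
  have hkα : (0 : ℝ) < (k : ℝ) - α := by
    have : (1 : ℝ) ≤ k := by exact_mod_cast hk
    linarith
  set V : ℝ := (volume (ball (0 : EuclideanSpace ℝ (Fin k)) 1)).toReal with hV
  have hVpos : 0 < V := ENNReal.toReal_pos (measure_ball_pos _ _ one_pos).ne'
    (measure_ball_lt_top).ne
  have hVeq : volume (ball (0 : EuclideanSpace ℝ (Fin k)) 1) = ENNReal.ofReal V :=
    (ENNReal.ofReal_toReal (measure_ball_lt_top).ne).symm
  have ht1 : ((2⁻¹ : ℝ)) ^ ((k : ℝ) - α) < 1 :=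
    Real.rpow_lt_one (by norm_num) (by norm_num) hkα
  have ht0 : (0:ℝ) < (2⁻¹ : ℝ) ^ ((k : ℝ) - α) := Real.rpow_pos_of_pos (by norm_num) _
  have hκpos : 0 < 2 ^ α * V * (1 - (2⁻¹ : ℝ) ^ ((k : ℝ) - α))⁻¹ := by
    have h2 : (0:ℝ) < 2 ^ α := Real.rpow_pos_of_pos (by norm_num) _
    have h3 : (0:ℝ) < (1 - (2⁻¹ : ℝ) ^ ((k : ℝ) - α))⁻¹ := inv_pos.2 (by linarith)
    positivity
  refine ⟨2 ^ α * V * (1 - (2⁻¹ : ℝ) ^ ((k : ℝ) - α))⁻¹, hκpos, fun R hR => ?_⟩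
  have key := dyadic_bound volume (fun u => (ENNReal.ofReal ‖u‖) ^ (-α)) 0
      (closedBall (0 : EuclideanSpace ℝ (Fin k)) R) hR
      (fun y hy => by simpa [dist_zero_right] using mem_closedBall.1 hy)
      (measure_singleton 0)
      (ENNReal.ofReal (2 ^ α * V * R ^ ((k : ℝ) - α)))
      (ENNReal.ofReal ((2⁻¹ : ℝ) ^ ((k : ℝ) - α)))
      (fun j => ?_)
  · refine key.trans (le_of_eq ?_)
    rw [← ENNReal.ofReal_one, ← ENNReal.ofReal_sub _ ht0.le,
      ← ENNReal.ofReal_inv_of_pos (by linarith), ← ENNReal.ofReal_mul (by positivity)]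
    ring_nf
  · -- per-annulus bound
    set c : ℕ → ℝ := fun j => R * (2⁻¹ : ℝ) ^ j with hc
    have hcpos : ∀ j, 0 < c j := fun j => by positivity
    have hb : ∀ y ∈ closedBall (0 : EuclideanSpace ℝ (Fin k)) R ∩
        {y | c (j+1) < dist y 0 ∧ dist y 0 ≤ c j},
        (ENNReal.ofReal ‖y‖) ^ (-α) ≤ ENNReal.ofReal ((c (j+1)) ^ (-α)) := by
      intro y hy
      have h1 : c (j+1) < ‖y‖ := by simpa [dist_zero_right] using hy.2.1
      calc (ENNReal.ofReal ‖y‖) ^ (-α) ≤ (ENNReal.ofReal (c (j+1))) ^ (-α) :=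
            ennreal_rpow_anti (ENNReal.ofReal_le_ofReal h1.le) (by linarith)
        _ = ENNReal.ofReal ((c (j+1)) ^ (-α)) := ENNReal.ofReal_rpow_of_pos (hcpos _)
    calc ∫⁻ y in closedBall (0 : EuclideanSpace ℝ (Fin k)) R ∩
          {y | c (j+1) < dist y 0 ∧ dist y 0 ≤ c j}, (ENNReal.ofReal ‖y‖) ^ (-α)
        ≤ ∫⁻ _ in closedBall (0 : EuclideanSpace ℝ (Fin k)) R ∩
          {y | c (j+1) < dist y 0 ∧ dist y 0 ≤ c j}, ENNReal.ofReal ((c (j+1)) ^ (-α)) :=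
          setLIntegral_mono measurable_const hb
      _ = ENNReal.ofReal ((c (j+1)) ^ (-α)) *
          volume (closedBall (0 : EuclideanSpace ℝ (Fin k)) R ∩
            {y | c (j+1) < dist y 0 ∧ dist y 0 ≤ c j}) := setLIntegral_const _ _
      _ ≤ ENNReal.ofReal ((c (j+1)) ^ (-α)) *
          volume (closedBall (0 : EuclideanSpace ℝ (Fin k)) (c j)) := by
          gcongr
          intro y hy
          exact mem_closedBall.2 (by simpa [dist_zero_right] using hy.2.2)
      _ = ENNReal.ofReal ((c (j+1)) ^ (-α)) * (ENNReal.ofReal ((c j) ^ k) * ENNReal.ofReal V) := by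
          rw [Measure.addHaar_closedBall volume _ (hcpos j).le, hVeq, finrank_euclideanSpace_fin]
      _ = ENNReal.ofReal ((c (j+1)) ^ (-α) * ((c j) ^ k * V)) := by
          rw [ENNReal.ofReal_mul (by positivity), ENNReal.ofReal_mul (by positivity)]
      _ = ENNReal.ofReal (2 ^ α * V * R ^ ((k : ℝ) - α)) *
          (ENNReal.ofReal ((2⁻¹ : ℝ) ^ ((k : ℝ) - α))) ^ j := by
          rw [← ENNReal.ofReal_pow ht0.le, ← ENNReal.ofReal_mul (by positivity)]
          congr 1
          have e1 : (c (j+1)) ^ (-α) = R ^ (-α) * (2⁻¹:ℝ) ^ (-α) * ((2⁻¹:ℝ) ^ (-α)) ^ j := by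
            rw [hc]
            rw [Real.mul_rpow hR.le (by positivity), pow_succ, mul_comm ((2⁻¹:ℝ)^j),
              Real.mul_rpow (by norm_num) (by positivity), pow_rpow_comm (by norm_num)]
            ring
          have e2 : ((c j) : ℝ) ^ k = R ^ (k:ℝ) * (((2⁻¹:ℝ) ^ (k:ℝ)) ^ j) := by
            have hx : ((2⁻¹:ℝ) ^ j) ^ (k:ℕ) = ((2⁻¹:ℝ) ^ ((k:ℝ))) ^ j := by
              rw [← Real.rpow_natCast ((2⁻¹:ℝ) ^ j) k, pow_rpow_comm (by norm_num : (0:ℝ) ≤ 2⁻¹)]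
            rw [hc, mul_pow, hx, ← Real.rpow_natCast R k]
          rw [e1, e2]
          have e3 : R ^ (-α) * R ^ ((k:ℝ)) = R ^ ((k:ℝ) - α) := by
            rw [← Real.rpow_add hR]; ring_nf
          have e4 : (2⁻¹:ℝ) ^ (-α) * (2⁻¹:ℝ) ^ ((k:ℝ)) = (2⁻¹:ℝ) ^ ((k:ℝ) - α) := by
            rw [← Real.rpow_add (by norm_num)]; ring_nf
          have e5 : ((2⁻¹:ℝ) ^ (-α)) ^ j * ((2⁻¹:ℝ) ^ ((k:ℝ))) ^ j = ((2⁻¹:ℝ) ^ ((k:ℝ) - α)) ^ j := by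
            rw [← mul_pow, e4]
          have e6 : (2⁻¹:ℝ) ^ (-α) = 2 ^ α := by
            rw [← Real.rpow_neg_one (2:ℝ), ← Real.rpow_mul (by norm_num)]; ring_nf
          calc R ^ (-α) * (2⁻¹:ℝ) ^ (-α) * ((2⁻¹:ℝ) ^ (-α)) ^ j *
                (R ^ (k:ℝ) * (((2⁻¹:ℝ) ^ (k:ℝ)) ^ j) * V)
              = (R ^ (-α) * R ^ ((k:ℝ))) * (2⁻¹:ℝ) ^ (-α) * V *
                (((2⁻¹:ℝ) ^ (-α)) ^ j * ((2⁻¹:ℝ) ^ ((k:ℝ))) ^ j) := by ring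
            _ = 2 ^ α * V * R ^ ((k:ℝ) - α) * ((2⁻¹:ℝ) ^ ((k:ℝ) - α)) ^ j := by
                rw [e3, e5, e6]; ring

lemma chart_step {N k : ℕ} (hk1 : 1 ≤ k) (hkN : k ≤ N) {α : ℝ} (hα0 : 0 < α) (hαk : α < k)
    {K : Set (EuclideanSpace ℝ (Fin N))} (Kcomp : IsCompact K) (Kne : K.Nonempty)
    (ξ : EuclideanSpace ℝ (Fin N))
    (e : EuclideanSpace ℝ (Fin N) ≃L[ℝ] EuclideanSpace ℝ (Fin k) × EuclideanSpace ℝ (Fin (N - k)))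
    (β : ℝ) (Γ : EuclideanSpace ℝ (Fin (N - k)) → EuclideanSpace ℝ (Fin k))
    (hβ : 0 < β) (hΓ : ContDiff ℝ 2 Γ)
    (hgraph : ∀ x, dist x ξ < β → (x ∈ K ↔ (e x).1 = Γ (e x).2)) :
    ∃ A : ℝ≥0∞, A ≠ ⊤ ∧ ∀ (x : EuclideanSpace ℝ (Fin N)) (r : ℝ) (z0 : EuclideanSpace ℝ (Fin N)),
      0 < r → 8 * r ≤ β → z0 ∈ K → dist z0 ξ < β / 8 → dist x z0 ≤ 2 * r →
      ∫⁻ y in {y | Metric.infDist y K ≤ r} ∩ ball x r,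
          ENNReal.ofReal (Metric.infDist y K ^ (-α))
        ≤ A * ENNReal.ofReal (r ^ ((N : ℝ) - α)) := by
  obtain ⟨κ, hκpos, hκ⟩ := lintegral_ball_rpow_neg hk1 hα0 hαk
  set eL := (e : EuclideanSpace ℝ (Fin N) →L[ℝ]
    EuclideanSpace ℝ (Fin k) × EuclideanSpace ℝ (Fin (N - k))) with heL
  set en : ℝ := ‖eL‖ + 1 with hen
  have hen0 : 0 < en := by positivity
  have hediff : ∀ y z : EuclideanSpace ℝ (Fin N), ‖e y - e z‖ ≤ en * dist y z := by
    intro y z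
    have h1 : e y - e z = eL (y - z) := by simp [heL]
    rw [h1, dist_eq_norm]
    calc ‖eL (y - z)‖ ≤ ‖eL‖ * ‖y - z‖ := eL.le_opNorm _
      _ ≤ en * ‖y - z‖ := by
          have := norm_nonneg (y - z); nlinarith [norm_nonneg eL]
  set W := closedBall ((e ξ).2) (en * β) with hW
  obtain ⟨Cd, hCd⟩ := (isCompact_closedBall ((e ξ).2) (en * β)).exists_bound_of_continuousOn
    ((hΓ.continuous_fderiv (by norm_num)).continuousOn)
  set L : NNReal := Real.toNNReal Cd with hL
  have hLip : LipschitzOnWith L Γ W := by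
    refine Convex.lipschitzOnWith_of_nnnorm_fderiv_le
      (fun w _ => (hΓ.differentiable (by norm_num)).differentiableAt)
      (fun w hw => ?_) (convex_closedBall _ _)
    rw [← NNReal.coe_le_coe]
    simp only [coe_nnnorm, hL, Real.coe_toNNReal']
    exact le_max_of_le_left (hCd w hw)
  set M : ℝ := (1 + (L : ℝ)) * en with hM
  have hM0 : 0 < M := by positivity
  set M' : ℝ := 3 * en with hM'
  have hM'0 : 0 < M' := by positivity
  haveI : (volume : Measure (EuclideanSpace ℝ (Fin k) × EuclideanSpace ℝ (Fin (N - k)))).IsAddHaarMeasure :=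
    Measure.prod.instIsAddHaarMeasure volume volume
  have hmap : Measure.map (⇑e) volume
      = ((Measure.map (⇑e) volume).addHaarScalarFactor volume : ℝ≥0∞) • volume := by
    refine (Measure.isAddLeftInvariant_eq_smul (Measure.map (⇑e) volume) volume).trans ?_
    ext s hs
    simp [Measure.smul_apply, Measure.coe_nnreal_smul_apply]
  set c : ℝ≥0∞ := ((Measure.map (⇑e) volume).addHaarScalarFactor volume : ℝ≥0∞) with hc
  have hcne : c ≠ ⊤ := ENNReal.coe_ne_top
  set V' : ℝ≥0∞ := volume (ball (0 : EuclideanSpace ℝ (Fin (N - k))) 1) with hV'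
  have hV'ne : V' ≠ ⊤ := measure_ball_lt_top.ne
  refine ⟨ENNReal.ofReal (M ^ α) * c *
      ENNReal.ofReal (κ * M ^ ((k : ℝ) - α) * M' ^ ((N - k : ℕ))) * V',
    ENNReal.mul_ne_top (ENNReal.mul_ne_top (ENNReal.mul_ne_top ENNReal.ofReal_ne_top hcne)
      ENNReal.ofReal_ne_top) hV'ne, ?_⟩
  intro x r z0 hr h8r hz0K hz0ξ hxz0
  set S := {y | Metric.infDist y K ≤ r} ∩ ball x r with hS
  set h : EuclideanSpace ℝ (Fin k) × EuclideanSpace ℝ (Fin (N - k)) → ℝ≥0∞ :=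
    fun p => (ENNReal.ofReal ‖p.1 - Γ p.2‖) ^ (-α) with hh
  set T : Set (EuclideanSpace ℝ (Fin k) × EuclideanSpace ℝ (Fin (N - k))) :=
    {p | dist p.2 ((e z0).2) ≤ M' * r} ∩ {p | dist p.1 (Γ p.2) ≤ M * r} with hT
  -- geometry
  have geom : ∀ y ∈ S, e y ∈ T ∧ ‖(e y).1 - Γ ((e y).2)‖ ≤ M * Metric.infDist y K := by
    intro y hy
    obtain ⟨hyd, hyb⟩ := hy
    rw [mem_setOf_eq] at hyd
    rw [mem_ball] at hyb
    obtain ⟨z, hzK, hyz⟩ := Kcomp.exists_infDist_eq_dist Kne y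
    have hyzr : dist y z ≤ r := by rw [← hyz]; exact hyd
    have hrβ : r ≤ β / 8 := by linarith
    have hyξ2 : dist y ξ < β / 2 := by
      calc dist y ξ ≤ dist y x + dist x z0 + dist z0 ξ := dist_triangle4 y x z0 ξ
        _ < r + 2 * r + β / 8 := by linarith
        _ ≤ β / 2 := by linarith
    have hzξ : dist z ξ < β := by
      calc dist z ξ ≤ dist z y + dist y ξ := dist_triangle z y ξ
        _ < β / 8 + β / 2 := by
            rw [dist_comm]
            have : dist y z ≤ β / 8 := le_trans hyzr hrβ
            linarith
        _ < β := by linarith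
    have hgr : (e z).1 = Γ ((e z).2) := (hgraph z hzξ).1 hzK
    have sndW : ∀ v : EuclideanSpace ℝ (Fin N), dist v ξ < β → (e v).2 ∈ W := by
      intro v hv
      rw [hW, mem_closedBall, dist_eq_norm]
      have h5 : (e v).2 - (e ξ).2 = (e v - e ξ).2 := (Prod.snd_sub _ _).symm
      rw [h5]
      calc ‖(e v - e ξ).2‖ ≤ ‖e v - e ξ‖ := norm_snd_le _
        _ ≤ en * dist v ξ := hediff v ξ
        _ ≤ en * β := by nlinarith
    have hyW : (e y).2 ∈ W := sndW y (lt_trans hyξ2 (by linarith))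
    have hzW : (e z).2 ∈ W := sndW z hzξ
    have key1 : ‖(e y).1 - Γ ((e y).2)‖ ≤ M * Metric.infDist y K := by
      have h6 : ‖(e y).1 - (e z).1‖ ≤ en * dist y z := by
        have h5 : (e y).1 - (e z).1 = (e y - e z).1 := (Prod.fst_sub _ _).symm
        rw [h5]
        exact le_trans (norm_fst_le _) (hediff y z)
      have h7 : ‖Γ ((e z).2) - Γ ((e y).2)‖ ≤ (L : ℝ) * (en * dist y z) := by
        have h8 := hLip.dist_le_mul _ hzW _ hyW
        rw [dist_eq_norm] at h8
        refine h8.trans ?_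
        have h9 : dist ((e z).2) ((e y).2) ≤ en * dist y z := by
          rw [dist_eq_norm]
          have h5 : (e z).2 - (e y).2 = (e z - e y).2 := (Prod.snd_sub _ _).symm
          rw [h5]
          calc ‖(e z - e y).2‖ ≤ ‖e z - e y‖ := norm_snd_le _
            _ ≤ en * dist z y := hediff z y
            _ = en * dist y z := by rw [dist_comm]
        nlinarith [NNReal.coe_nonneg L]
      calc ‖(e y).1 - Γ ((e y).2)‖
          ≤ ‖(e y).1 - (e z).1‖ + ‖(e z).1 - Γ ((e y).2)‖ := norm_sub_le_norm_sub_add_norm_sub _ _ _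
        _ = ‖(e y).1 - (e z).1‖ + ‖Γ ((e z).2) - Γ ((e y).2)‖ := by rw [hgr]
        _ ≤ en * dist y z + (L : ℝ) * (en * dist y z) := add_le_add h6 h7
        _ = M * dist y z := by rw [hM]; ring
        _ = M * Metric.infDist y K := by rw [hyz]
    refine ⟨⟨?_, ?_⟩, key1⟩
    · rw [mem_setOf_eq, dist_eq_norm]
      have h5 : (e y).2 - (e z0).2 = (e y - e z0).2 := (Prod.snd_sub _ _).symm
      rw [h5]
      calc ‖(e y - e z0).2‖ ≤ ‖e y - e z0‖ := norm_snd_le _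
        _ ≤ en * dist y z0 := hediff y z0
        _ ≤ en * (3 * r) := by
            have h7 : dist y z0 ≤ dist y x + dist x z0 := dist_triangle y x z0
            have h6 : dist y z0 ≤ 3 * r := by linarith
            exact mul_le_mul_of_nonneg_left h6 hen0.le
        _ = M' * r := by rw [hM']; ring
    · rw [mem_setOf_eq, dist_eq_norm]
      refine key1.trans ?_
      exact mul_le_mul_of_nonneg_left hyd hM0.le
  -- pointwise bound
  have hαne : -α ≠ 0 := by linarith
  have hpt : ∀ y ∈ S, ENNReal.ofReal (Metric.infDist y K ^ (-α))
      ≤ ENNReal.ofReal (M ^ α) * h (e y) := by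
    intro y hy
    obtain ⟨-, hk1'⟩ := geom y hy
    rcases eq_or_lt_of_le (Metric.infDist_nonneg (s := K) (x := y)) with h0 | h0
    · rw [← h0, Real.zero_rpow hαne]
      simp
    · calc ENNReal.ofReal (Metric.infDist y K ^ (-α))
          = ENNReal.ofReal (M ^ α) * ENNReal.ofReal ((M * Metric.infDist y K) ^ (-α)) := by
            rw [← ENNReal.ofReal_mul (by positivity)]
            congr 1
            rw [Real.mul_rpow hM0.le h0.le, ← mul_assoc, ← Real.rpow_add hM0]
            simp
        _ = ENNReal.ofReal (M ^ α) * (ENNReal.ofReal (M * Metric.infDist y K)) ^ (-α) := by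
            rw [ENNReal.ofReal_rpow_of_pos (by positivity)]
        _ ≤ ENNReal.ofReal (M ^ α) * (ENNReal.ofReal ‖(e y).1 - Γ ((e y).2)‖) ^ (-α) :=
            _root_.mul_le_mul_right (ennreal_rpow_anti (ENNReal.ofReal_le_ofReal hk1')
              (by linarith)) _
  have hTmeas : MeasurableSet T := by
    have hcl : IsClosed T := by
      refine IsClosed.inter ?_ ?_
      · exact isClosed_le (continuous_snd.dist continuous_const) continuous_const
      · exact isClosed_le (continuous_fst.dist (hΓ.continuous.comp continuous_snd))
          continuous_const
    exact hcl.measurableSet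
  have hhmeas : Measurable h :=
    ((continuous_fst.sub (hΓ.continuous.comp continuous_snd)).norm.measurable.ennreal_ofReal).pow
      measurable_const
  have hsub : S ⊆ ⇑e ⁻¹' T := fun y hy => (geom y hy).1
  -- Fubini on T
  have inner_eq : ∀ w : EuclideanSpace ℝ (Fin (N - k)),
      (∫⁻ u, T.indicator h (u, w) ∂volume)
      = (closedBall ((e z0).2) (M' * r)).indicator
          (fun _ => ∫⁻ v in closedBall (0 : EuclideanSpace ℝ (Fin k)) (M * r),
            (ENNReal.ofReal ‖v‖) ^ (-α)) w := by
    intro w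
    by_cases hw : w ∈ closedBall ((e z0).2) (M' * r)
    · rw [indicator_of_mem hw]
      have hrw : ∀ u, T.indicator h (u, w)
          = (closedBall (Γ w) (M * r)).indicator
              (fun u => (ENNReal.ofReal ‖u - Γ w‖) ^ (-α)) u := by
        intro u
        by_cases hu : u ∈ closedBall (Γ w) (M * r)
        · rw [indicator_of_mem hu, indicator_of_mem]
          constructor
          · exact mem_closedBall.1 hw
          · exact mem_closedBall.1 hu
        · rw [indicator_of_notMem hu, indicator_of_notMem]
          intro hmem
          exact hu (mem_closedBall.2 hmem.2)
      simp_rw [hrw]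
      rw [lintegral_indicator measurableSet_closedBall]
      have hemb : MeasurableEmbedding (fun v : EuclideanSpace ℝ (Fin k) => v + Γ w) :=
        (MeasurableEquiv.addRight (Γ w)).measurableEmbedding
      have hmp : MeasurePreserving (fun v : EuclideanSpace ℝ (Fin k) => v + Γ w)
          volume volume := measurePreserving_add_right volume (Γ w)
      have hpre : (fun v : EuclideanSpace ℝ (Fin k) => v + Γ w) ⁻¹'
          closedBall (Γ w) (M * r) = closedBall 0 (M * r) := by
        ext v
        simp [mem_closedBall, dist_eq_norm]
      rw [← hmp.setLIntegral_comp_preimage_emb hemb, hpre]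
      congr 1
      ext v
      simp
    · rw [indicator_of_notMem hw]
      have hrw : ∀ u, T.indicator h (u, w) = 0 := by
        intro u
        apply indicator_of_notMem
        intro hmem
        exact hw (mem_closedBall.2 hmem.1)
      simp_rw [hrw]
      exact lintegral_zero
  calc ∫⁻ y in S, ENNReal.ofReal (Metric.infDist y K ^ (-α))
      ≤ ∫⁻ y in S, ENNReal.ofReal (M ^ α) * h (e y) :=
        setLIntegral_mono
          (measurable_const.mul (hhmeas.comp e.continuous.measurable)) hpt
    _ = ENNReal.ofReal (M ^ α) * ∫⁻ y in S, h (e y) :=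
        lintegral_const_mul' _ _ ENNReal.ofReal_ne_top
    _ ≤ ENNReal.ofReal (M ^ α) * ∫⁻ y in ⇑e ⁻¹' T, h (e y) :=
        _root_.mul_le_mul_right (lintegral_mono_set hsub) _
    _ = ENNReal.ofReal (M ^ α) * ∫⁻ p in T, h p ∂(Measure.map (⇑e) volume) := by
        rw [setLIntegral_map hTmeas hhmeas e.continuous.measurable]
    _ = ENNReal.ofReal (M ^ α) * (c * ∫⁻ p in T, h p) := by
        rw [hmap, Measure.restrict_smul, lintegral_smul_measure, smul_eq_mul]
    _ ≤ ENNReal.ofReal (M ^ α) * (c *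
        (volume (closedBall ((e z0).2) (M' * r)) *
          ENNReal.ofReal (κ * (M * r) ^ ((k : ℝ) - α)))) := by
        refine _root_.mul_le_mul_right (_root_.mul_le_mul_right ?_ _) _
        rw [Measure.volume_eq_prod, ← lintegral_indicator hTmeas,
          lintegral_prod_symm _ ((hhmeas.indicator hTmeas).aemeasurable)]
        simp_rw [inner_eq]
        rw [lintegral_indicator_const measurableSet_closedBall]
        rw [mul_comm]
        exact _root_.mul_le_mul_right (hκ (M * r) (by positivity)) _
    _ ≤ ENNReal.ofReal (M ^ α) * (c *
        ((ENNReal.ofReal ((M' * r) ^ ((N - k : ℕ))) * V') *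
          ENNReal.ofReal (κ * (M * r) ^ ((k : ℝ) - α)))) := by
        rw [Measure.addHaar_closedBall volume _ (by positivity), finrank_euclideanSpace_fin]
    _ = ENNReal.ofReal (M ^ α) * c *
        ENNReal.ofReal (κ * M ^ ((k : ℝ) - α) * M' ^ ((N - k : ℕ))) * V' *
        ENNReal.ofReal (r ^ ((N : ℝ) - α)) := by
        rw [show ENNReal.ofReal (M ^ α) * (c * (ENNReal.ofReal ((M' * r) ^ (N - k)) * V' *
            ENNReal.ofReal (κ * (M * r) ^ ((k : ℝ) - α))))
          = ENNReal.ofReal (M ^ α) * c * (ENNReal.ofReal ((M' * r) ^ (N - k)) *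
            ENNReal.ofReal (κ * (M * r) ^ ((k : ℝ) - α))) * V' from by ring]
        rw [← ENNReal.ofReal_mul (by positivity)]
        have harith : ((M' * r) ^ ((N - k : ℕ)) : ℝ) * (κ * (M * r) ^ ((k : ℝ) - α))
            = (κ * M ^ ((k : ℝ) - α) * M' ^ ((N - k : ℕ))) * r ^ ((N : ℝ) - α) := by
          rw [mul_pow, Real.mul_rpow hM0.le hr.le]
          have hrsplit : (r : ℝ) ^ ((N - k : ℕ)) * r ^ ((k : ℝ) - α) = r ^ ((N : ℝ) - α) := by
            rw [← Real.rpow_natCast r (N - k), ← Real.rpow_add hr]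
            congr 1
            rw [Nat.cast_sub hkN]
            ring
          calc (M' ^ ((N - k : ℕ)) * r ^ ((N - k : ℕ)) : ℝ) * (κ * (M ^ ((k : ℝ) - α) * r ^ ((k : ℝ) - α)))
              = (κ * M ^ ((k : ℝ) - α) * M' ^ ((N - k : ℕ))) * (r ^ ((N - k : ℕ)) * r ^ ((k : ℝ) - α)) := by ring
            _ = (κ * M ^ ((k : ℝ) - α) * M' ^ ((N - k : ℕ))) * r ^ ((N : ℝ) - α) := by rw [hrsplit]
        rw [harith, ENNReal.ofReal_mul (by positivity : (0:ℝ) ≤ κ * M ^ ((k : ℝ) - α) * M' ^ ((N - k : ℕ)))]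
        ring

/-- `K` is a compact `C²` submanifold of `ℝ^N` of codimension `k`, described locally
(after a linear change of coordinates) as the graph of a `C²` map. -/
def IsC2CompactSubmanifold (N k : ℕ) (K : Set (EuclideanSpace ℝ (Fin N))) : Prop :=
  IsCompact K ∧ K.Nonempty ∧
  ∀ ξ ∈ K, ∃ (e : EuclideanSpace ℝ (Fin N) ≃L[ℝ]
      EuclideanSpace ℝ (Fin k) × EuclideanSpace ℝ (Fin (N - k)))
    (β : ℝ) (Γ : EuclideanSpace ℝ (Fin (N - k)) → EuclideanSpace ℝ (Fin k)),
    0 < β ∧ ContDiff ℝ 2 Γ ∧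
    ∀ x, dist x ξ < β → (x ∈ K ↔ (e x).1 = Γ (e x).2)

/-- `Ω` is a bounded `C²` domain of `ℝ^N`: open, bounded, and its boundary is locally
(after a linear change of coordinates) the graph of a `C²` function, with `Ω` on one side. -/
def IsC2BoundedDomain (N : ℕ) (Ω : Set (EuclideanSpace ℝ (Fin N))) : Prop :=
  IsOpen Ω ∧ Bornology.IsBounded Ω ∧ Ω.Nonempty ∧
  ∀ ξ ∈ frontier Ω, ∃ (e : EuclideanSpace ℝ (Fin N) ≃L[ℝ]
      ℝ × EuclideanSpace ℝ (Fin (N - 1)))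
    (β : ℝ) (γ : EuclideanSpace ℝ (Fin (N - 1)) → ℝ),
    0 < β ∧ ContDiff ℝ 2 γ ∧
    ∀ x, dist x ξ < β → (x ∈ Ω ↔ γ (e x).2 < (e x).1)

lemma chart_local_bound {N k : ℕ} (hk1 : 1 ≤ k) (hkN : k ≤ N) {α : ℝ} (hα0 : 0 < α)
    (hαk : α < k) {K : Set (EuclideanSpace ℝ (Fin N))} (hK : IsC2CompactSubmanifold N k K) :
    ∃ r0 : ℝ, 0 < r0 ∧ ∃ A : ℝ≥0∞, A ≠ ⊤ ∧ ∀ (x : EuclideanSpace ℝ (Fin N)) (r : ℝ),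
      0 < r → r ≤ r0 →
      ∫⁻ y in {y | Metric.infDist y K ≤ r} ∩ ball x r,
          ENNReal.ofReal (Metric.infDist y K ^ (-α))
        ≤ A * ENNReal.ofReal (r ^ ((N : ℝ) - α)) := by
  obtain ⟨Kcomp, Kne, hch⟩ := hK
  choose e β Γ hβ hΓ hgraph using hch
  choose A hAne hA using fun (ξ : EuclideanSpace ℝ (Fin N)) (hξ : ξ ∈ K) =>
    chart_step hk1 hkN hα0 hαk Kcomp Kne ξ (e ξ hξ) (β ξ hξ) (Γ ξ hξ) (hβ ξ hξ) (hΓ ξ hξ)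
      (hgraph ξ hξ)
  have hcov : K ⊆ ⋃ ξ : K, ball (ξ : EuclideanSpace ℝ (Fin N)) (β ξ ξ.2 / 8) := by
    intro ζ hζ
    exact mem_iUnion.2 ⟨⟨ζ, hζ⟩, mem_ball_self (by have := hβ ζ hζ; linarith)⟩
  obtain ⟨t, ht⟩ := Kcomp.elim_finite_subcover
    (fun ξ : K => ball (ξ : EuclideanSpace ℝ (Fin N)) (β ξ ξ.2 / 8)) (fun _ => isOpen_ball) hcov
  obtain ⟨ζ0, hζ0⟩ := id Kne
  have htne : t.Nonempty := by
    rcases mem_iUnion₂.1 (ht hζ0) with ⟨i, hi, -⟩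
    exact ⟨i, hi⟩
  set r0 := (t.inf' htne fun i => β i i.2) / 8 with hr0
  have hr0pos : 0 < r0 := by
    apply div_pos ?_ (by norm_num)
    rw [Finset.lt_inf'_iff]
    exact fun i _ => hβ i.1 i.2
  refine ⟨r0, hr0pos, ∑ i ∈ t, A i.1 i.2,
    (ENNReal.sum_lt_top.2 fun i _ => (hAne i.1 i.2).lt_top).ne, ?_⟩
  intro x r hr hrr0
  rcases eq_empty_or_nonempty ({y | Metric.infDist y K ≤ r} ∩ ball x r) with hS | ⟨y0, hy0⟩
  · rw [hS]
    simp
  · obtain ⟨z0, hz0K, hz0⟩ := Kcomp.exists_infDist_eq_dist Kne y0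
    have hxz0 : dist x z0 ≤ 2 * r := by
      have h1 : dist x z0 ≤ dist x y0 + dist y0 z0 := dist_triangle x y0 z0
      have h2 : dist x y0 < r := by rw [dist_comm]; exact mem_ball.1 hy0.2
      have h3 : dist y0 z0 ≤ r := by rw [← hz0]; exact hy0.1
      linarith
    rcases mem_iUnion₂.1 (ht hz0K) with ⟨i, hi, hz0i⟩
    have h8r : 8 * r ≤ β i i.2 := by
      have h4 : (t.inf' htne fun i => β i i.2) ≤ β i i.2 := Finset.inf'_le _ hi
      have h5 : r ≤ (t.inf' htne fun i => β i i.2) / 8 := hrr0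
      linarith
    refine (hA i.1 i.2 x r z0 hr h8r hz0K (mem_ball.1 hz0i) hxz0).trans ?_
    exact _root_.mul_le_mul_left (Finset.single_le_sum (fun j _ => zero_le (a := A j.1 j.2)) hi) _

lemma J_global {N k : ℕ} (hN : 1 ≤ N) (hk1 : 1 ≤ k) (hkN : k ≤ N) {α : ℝ} (hα0 : 0 < α)
    (hαk : α < k) (hαN : α < N) {K : Set (EuclideanSpace ℝ (Fin N))}
    (hK : IsC2CompactSubmanifold N k K)
    {Ω : Set (EuclideanSpace ℝ (Fin N))} (hbdd : Bornology.IsBounded Ω) :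
    ∃ AJ : ℝ≥0∞, AJ ≠ ⊤ ∧ ∀ (x : EuclideanSpace ℝ (Fin N)) (r : ℝ), 0 < r →
      ∫⁻ y in Ω ∩ ball x r, ENNReal.ofReal (Metric.infDist y K ^ (-α))
        ≤ AJ * ENNReal.ofReal (r ^ ((N : ℝ) - α)) := by
  haveI : Nonempty (Fin N) := ⟨⟨0, hN⟩⟩
  haveI : Nontrivial (EuclideanSpace ℝ (Fin N)) :=
    inferInstanceAs (Nontrivial (PiLp 2 fun _ : Fin N => ℝ))
  obtain ⟨r0, hr0pos, A, hAne, hA⟩ := chart_local_bound hk1 hkN hα0 hαk hK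
  set g : EuclideanSpace ℝ (Fin N) → ℝ≥0∞ :=
    fun y => ENNReal.ofReal (Metric.infDist y K ^ (-α)) with hg
  set VN : ℝ≥0∞ := volume (ball (0 : EuclideanSpace ℝ (Fin N)) 1) with hVN
  have hVNne : VN ≠ ⊤ := measure_ball_lt_top.ne
  -- small radius bound (without Ω)
  have Jsmall : ∀ (x : EuclideanSpace ℝ (Fin N)) (r : ℝ), 0 < r → r ≤ r0 →
      ∫⁻ y in ball x r, g y ≤ (A + VN) * ENNReal.ofReal (r ^ ((N : ℝ) - α)) := by
    intro x r hr hrr0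
    have hsplit : ball x r ⊆ ({y | Metric.infDist y K ≤ r} ∩ ball x r) ∪
        ({y | r < Metric.infDist y K} ∩ ball x r) := by
      intro y hy
      rcases le_or_gt (Metric.infDist y K) r with h | h
      · exact Or.inl ⟨h, hy⟩
      · exact Or.inr ⟨h, hy⟩
    have hb2 : ∫⁻ y in {y | r < Metric.infDist y K} ∩ ball x r, g y
        ≤ VN * ENNReal.ofReal (r ^ ((N : ℝ) - α)) := by
      have hpt : ∀ y ∈ {y | r < Metric.infDist y K} ∩ ball x r,
          g y ≤ ENNReal.ofReal (r ^ (-α)) := by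
        intro y hy
        exact ENNReal.ofReal_le_ofReal
          (Real.rpow_le_rpow_of_nonpos hr hy.1.le (by linarith))
      calc ∫⁻ y in {y | r < Metric.infDist y K} ∩ ball x r, g y
          ≤ ∫⁻ _ in {y | r < Metric.infDist y K} ∩ ball x r, ENNReal.ofReal (r ^ (-α)) :=
            setLIntegral_mono measurable_const hpt
        _ = ENNReal.ofReal (r ^ (-α)) *
            volume ({y | r < Metric.infDist y K} ∩ ball x r) := setLIntegral_const _ _
        _ ≤ ENNReal.ofReal (r ^ (-α)) * volume (ball x r) := by
            gcongr
            exact inter_subset_right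
        _ = ENNReal.ofReal (r ^ (-α)) * (ENNReal.ofReal (r ^ N) * VN) := by
            rw [Measure.addHaar_ball volume x hr.le, finrank_euclideanSpace_fin]
        _ = VN * ENNReal.ofReal (r ^ ((N : ℝ) - α)) := by
            rw [show ENNReal.ofReal (r ^ (-α)) * (ENNReal.ofReal (r ^ N) * VN)
                = ENNReal.ofReal (r ^ (-α)) * ENNReal.ofReal (r ^ N) * VN from by ring,
              ← ENNReal.ofReal_mul (by positivity),
              show (r : ℝ) ^ (-α) * r ^ N = r ^ ((N : ℝ) - α) from by
                rw [← Real.rpow_natCast r N, ← Real.rpow_add hr]; congr 1; ring]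
            ring
    calc ∫⁻ y in ball x r, g y
        ≤ ∫⁻ y in ({y | Metric.infDist y K ≤ r} ∩ ball x r) ∪
            ({y | r < Metric.infDist y K} ∩ ball x r), g y := lintegral_mono_set hsplit
      _ ≤ (∫⁻ y in {y | Metric.infDist y K ≤ r} ∩ ball x r, g y) +
          ∫⁻ y in {y | r < Metric.infDist y K} ∩ ball x r, g y := lintegral_union_le _ _ _
      _ ≤ A * ENNReal.ofReal (r ^ ((N : ℝ) - α)) + VN * ENNReal.ofReal (r ^ ((N : ℝ) - α)) :=
          add_le_add (hA x r hr hrr0) hb2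
      _ = (A + VN) * ENNReal.ofReal (r ^ ((N : ℝ) - α)) := by ring
  -- global bound on Ω
  have hΩc : IsCompact (closure Ω) := hbdd.isCompact_closure
  have hcov2 : closure Ω ⊆ ⋃ z : closure Ω, ball (z : EuclideanSpace ℝ (Fin N)) r0 :=
    fun z hz => mem_iUnion.2 ⟨⟨z, hz⟩, mem_ball_self hr0pos⟩
  obtain ⟨t2, ht2⟩ := hΩc.elim_finite_subcover
    (fun z : closure Ω => ball (z : EuclideanSpace ℝ (Fin N)) r0) (fun _ => isOpen_ball) hcov2
  set B0 : ℝ≥0∞ := (t2.card : ℝ≥0∞) * ((A + VN) * ENNReal.ofReal (r0 ^ ((N : ℝ) - α))) with hB0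
  have hB0ne : B0 ≠ ⊤ := by
    refine ENNReal.mul_ne_top (by simp) (ENNReal.mul_ne_top ?_ ENNReal.ofReal_ne_top)
    exact ENNReal.add_ne_top.2 ⟨hAne, hVNne⟩
  have hglob : ∫⁻ y in Ω, g y ≤ B0 := by
    have hsets : (⋃ i ∈ t2, ball ((i : closure Ω) : EuclideanSpace ℝ (Fin N)) r0)
        = ⋃ i : t2, ball ((i : closure Ω) : EuclideanSpace ℝ (Fin N)) r0 := by
      ext z
      simp
    calc ∫⁻ y in Ω, g y
        ≤ ∫⁻ y in ⋃ i : t2, ball ((i : closure Ω) : EuclideanSpace ℝ (Fin N)) r0, g y := by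
          apply lintegral_mono_set
          rw [← hsets]
          exact subset_trans subset_closure ht2
      _ ≤ ∑' i : t2, ∫⁻ y in ball ((i : closure Ω) : EuclideanSpace ℝ (Fin N)) r0, g y :=
          lintegral_iUnion_le _ _
      _ ≤ ∑' _i : t2, (A + VN) * ENNReal.ofReal (r0 ^ ((N : ℝ) - α)) := by
          exact ENNReal.tsum_le_tsum fun i => Jsmall _ r0 hr0pos le_rfl
      _ = B0 := by
          rw [tsum_fintype, Finset.sum_const, hB0]
          simp [nsmul_eq_mul, Finset.card_attach]
  refine ⟨(A + VN) + B0 * ENNReal.ofReal (r0 ^ (α - (N : ℝ))), ?_, ?_⟩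
  · refine ENNReal.add_ne_top.2 ⟨ENNReal.add_ne_top.2 ⟨hAne, hVNne⟩, ?_⟩
    exact ENNReal.mul_ne_top hB0ne ENNReal.ofReal_ne_top
  intro x r hr
  rcases le_or_gt r r0 with hcase | hcase
  · calc ∫⁻ y in Ω ∩ ball x r, g y ≤ ∫⁻ y in ball x r, g y :=
          lintegral_mono_set inter_subset_right
      _ ≤ (A + VN) * ENNReal.ofReal (r ^ ((N : ℝ) - α)) := Jsmall x r hr hcase
      _ ≤ _ := by
          apply _root_.mul_le_mul_left
          exact le_add_right le_rfl
  · have h1 : ∫⁻ y in Ω ∩ ball x r, g y ≤ B0 :=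
      le_trans (lintegral_mono_set inter_subset_left) hglob
    have h2 : (1 : ℝ≥0∞) ≤ ENNReal.ofReal (r0 ^ (α - (N : ℝ))) *
        ENNReal.ofReal (r ^ ((N : ℝ) - α)) := by
      rw [← ENNReal.ofReal_mul (by positivity)]
      have h3 : (1 : ℝ) ≤ r0 ^ (α - (N : ℝ)) * r ^ ((N : ℝ) - α) := by
        have h4 : r0 ^ ((N : ℝ) - α) ≤ r ^ ((N : ℝ) - α) :=
          Real.rpow_le_rpow hr0pos.le hcase.le (by linarith)
        have h5 : r0 ^ (α - (N : ℝ)) * r0 ^ ((N : ℝ) - α) = 1 := by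
          rw [← Real.rpow_add hr0pos]; simp
        have h6 : 0 < r0 ^ (α - (N : ℝ)) := Real.rpow_pos_of_pos hr0pos _
        nlinarith
      calc (1 : ℝ≥0∞) = ENNReal.ofReal 1 := by simp
        _ ≤ _ := ENNReal.ofReal_le_ofReal h3
    calc ∫⁻ y in Ω ∩ ball x r, g y ≤ B0 := h1
      _ = B0 * 1 := by rw [mul_one]
      _ ≤ B0 * (ENNReal.ofReal (r0 ^ (α - (N : ℝ))) * ENNReal.ofReal (r ^ ((N : ℝ) - α))) :=
          _root_.mul_le_mul_right h2 _
      _ = B0 * ENNReal.ofReal (r0 ^ (α - (N : ℝ))) * ENNReal.ofReal (r ^ ((N : ℝ) - α)) := by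
          ring
      _ ≤ _ := by
          apply _root_.mul_le_mul_left
          exact le_add_left le_rfl

/-- Uniform Riesz-potential estimate with distance weight: for `γ < N` and
`α ∈ (0, min{k,γ})`, `sup_{x∈Ω} ∫_Ω |x-y|^{γ-N} d_K(y)^{-α} dy ≤ C`. -/
theorem stmt11 (N k : ℕ) (hN : 3 ≤ N) (hk1 : 1 ≤ k) (hkN : k ≤ N)
    (Ω K : Set (EuclideanSpace ℝ (Fin N)))
    (hΩ : IsC2BoundedDomain N Ω) (hK : IsC2CompactSubmanifold N k K)
    (hKΩ : K ⊆ frontier Ω)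
    (γ α : ℝ) (hγ : γ < N) (hα0 : 0 < α) (hαk : α < k) (hαγ : α < γ) :
    ∃ C : ℝ, 0 < C ∧ ∀ x ∈ Ω,
      ∫ y in Ω, dist x y ^ (-(N : ℝ) + γ) * Metric.infDist y K ^ (-α) ≤ C := by
  haveI : Nonempty (Fin N) := ⟨⟨0, by omega⟩⟩
  haveI : Nontrivial (EuclideanSpace ℝ (Fin N)) :=
    inferInstanceAs (Nontrivial (PiLp 2 fun _ : Fin N => ℝ))
  obtain ⟨hΩo, hΩb, hΩne, -⟩ := hΩ
  have hN1 : (1 : ℕ) ≤ N := by omega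
  have hαN : α < N := by
    have : (k : ℝ) ≤ N := by exact_mod_cast hkN
    linarith
  have hγα : 0 < γ - α := by linarith
  have hp0 : -(N : ℝ) + γ < 0 := by linarith
  obtain ⟨AJ, hAJne, hAJ⟩ := J_global hN1 hk1 hkN hα0 hαk hαN hK hΩb
  obtain ⟨DC, hDC⟩ := Metric.isBounded_iff.1 hΩb
  set D : ℝ := max DC 1 with hD
  have hDpos : 0 < D := lt_of_lt_of_le one_pos (le_max_right _ _)
  set p : ℝ := -(N : ℝ) + γ with hp
  set q : ℝ≥0∞ := ENNReal.ofReal ((2⁻¹ : ℝ) ^ (γ - α)) with hq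
  have hqlt : q < 1 := by
    rw [hq, ← ENNReal.ofReal_one]
    exact ENNReal.ofReal_lt_ofReal_iff_of_nonneg (by positivity) |>.2
      (Real.rpow_lt_one (by norm_num) (by norm_num) hγα)
  set A : ℝ≥0∞ := AJ * ENNReal.ofReal ((D / 2) ^ p * (2 * D) ^ ((N : ℝ) - α)) with hA
  have hAne : A ≠ ⊤ := ENNReal.mul_ne_top hAJne ENNReal.ofReal_ne_top
  set B : ℝ≥0∞ := A * (1 - q)⁻¹ with hB
  have hBne : B ≠ ⊤ := by
    refine ENNReal.mul_ne_top hAne (ENNReal.inv_ne_top.2 ?_)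
    have : (0 : ℝ≥0∞) < 1 - q := tsub_pos_of_lt hqlt
    exact this.ne'
  refine ⟨B.toReal + 1, by positivity, ?_⟩
  intro x hx
  -- nonnegativity and measurability
  have hFnn : ∀ y, 0 ≤ dist x y ^ p * Metric.infDist y K ^ (-α) := by
    intro y
    have h1 : (0:ℝ) ≤ dist x y ^ p := Real.rpow_nonneg dist_nonneg _
    have h2 : (0:ℝ) ≤ Metric.infDist y K ^ (-α) :=
      Real.rpow_nonneg Metric.infDist_nonneg _
    positivity
  have hFm : Measurable fun y => dist x y ^ p * Metric.infDist y K ^ (-α) := by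
    apply Measurable.mul
    · exact ((continuous_const.dist continuous_id).measurable).pow measurable_const
    · exact ((continuous_infDist_pt K).measurable).pow measurable_const
  rw [MeasureTheory.integral_eq_lintegral_of_nonneg_ae
    (Filter.Eventually.of_forall fun y => hFnn y) (hFm.aestronglyMeasurable)]
  -- lintegral bound
  have hlint : ∫⁻ y in Ω, ENNReal.ofReal (dist x y ^ p * Metric.infDist y K ^ (-α)) ≤ B := by
    refine dyadic_bound volume _ x Ω hDpos (fun y hy => le_trans (hDC hy hx) (le_max_left _ _))
      (measure_singleton x) A q (fun j => ?_)
    set cj : ℝ := D * (2⁻¹ : ℝ) ^ j with hcj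
    set cj1 : ℝ := D * (2⁻¹ : ℝ) ^ (j + 1) with hcj1
    have hcjpos : 0 < cj := by positivity
    have hcj1pos : 0 < cj1 := by positivity
    have hpt : ∀ y ∈ Ω ∩ {y | cj1 < dist y x ∧ dist y x ≤ cj},
        ENNReal.ofReal (dist x y ^ p * Metric.infDist y K ^ (-α)) ≤
        ENNReal.ofReal (cj1 ^ p) * ENNReal.ofReal (Metric.infDist y K ^ (-α)) := by
      intro y hy
      rw [ENNReal.ofReal_mul (Real.rpow_nonneg dist_nonneg _)]
      apply _root_.mul_le_mul_left
      apply ENNReal.ofReal_le_ofReal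
      rw [dist_comm x y]
      exact Real.rpow_le_rpow_of_nonpos hcj1pos hy.2.1.le hp0.le
    calc ∫⁻ y in Ω ∩ {y | cj1 < dist y x ∧ dist y x ≤ cj},
          ENNReal.ofReal (dist x y ^ p * Metric.infDist y K ^ (-α))
        ≤ ∫⁻ y in Ω ∩ {y | cj1 < dist y x ∧ dist y x ≤ cj},
          ENNReal.ofReal (cj1 ^ p) * ENNReal.ofReal (Metric.infDist y K ^ (-α)) :=
          setLIntegral_mono
            (measurable_const.mul (((continuous_infDist_pt K).measurable.pow measurable_const).ennreal_ofReal)) hpt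
      _ = ENNReal.ofReal (cj1 ^ p) *
          ∫⁻ y in Ω ∩ {y | cj1 < dist y x ∧ dist y x ≤ cj},
            ENNReal.ofReal (Metric.infDist y K ^ (-α)) :=
          lintegral_const_mul' _ _ ENNReal.ofReal_ne_top
      _ ≤ ENNReal.ofReal (cj1 ^ p) *
          ∫⁻ y in Ω ∩ ball x (2 * cj), ENNReal.ofReal (Metric.infDist y K ^ (-α)) := by
          apply _root_.mul_le_mul_right
          apply lintegral_mono_set
          intro y hy
          refine ⟨hy.1, ?_⟩
          rw [mem_ball, dist_comm]
          have := hy.2.2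
          rw [dist_comm] at this
          linarith
      _ ≤ ENNReal.ofReal (cj1 ^ p) * (AJ * ENNReal.ofReal ((2 * cj) ^ ((N : ℝ) - α))) :=
          _root_.mul_le_mul_right (hAJ x (2 * cj) (by positivity)) _
      _ = A * q ^ j := by
          rw [hA, hq, ← ENNReal.ofReal_pow (by positivity)]
          rw [show ENNReal.ofReal (cj1 ^ p) * (AJ * ENNReal.ofReal ((2 * cj) ^ ((N : ℝ) - α)))
            = AJ * (ENNReal.ofReal (cj1 ^ p) * ENNReal.ofReal ((2 * cj) ^ ((N : ℝ) - α)))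
            from by ring]
          rw [← ENNReal.ofReal_mul (by positivity), mul_assoc,
            ← ENNReal.ofReal_mul (by positivity)]
          congr 2
          have e1 : cj1 ^ p = (D / 2) ^ p * ((2⁻¹ : ℝ) ^ p) ^ j := by
            rw [hcj1, pow_succ, show D * ((2⁻¹:ℝ) ^ j * 2⁻¹) = (D / 2) * (2⁻¹:ℝ) ^ j from by ring,
              Real.mul_rpow (by positivity) (by positivity), pow_rpow_comm (by norm_num)]
          have e2 : (2 * cj) ^ ((N : ℝ) - α) = (2 * D) ^ ((N : ℝ) - α) *
              ((2⁻¹ : ℝ) ^ ((N : ℝ) - α)) ^ j := by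
            rw [hcj, show (2 : ℝ) * (D * (2⁻¹:ℝ) ^ j) = (2 * D) * (2⁻¹:ℝ) ^ j from by ring,
              Real.mul_rpow (by positivity) (by positivity), pow_rpow_comm (by norm_num)]
          rw [e1, e2]
          have e3 : ((2⁻¹:ℝ) ^ p) ^ j * ((2⁻¹:ℝ) ^ ((N : ℝ) - α)) ^ j
              = ((2⁻¹:ℝ) ^ (γ - α)) ^ j := by
            rw [← mul_pow, ← Real.rpow_add (by norm_num)]
            congr 2
            rw [hp]; ring
          calc (D / 2) ^ p * ((2⁻¹:ℝ) ^ p) ^ j *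
                ((2 * D) ^ ((N : ℝ) - α) * ((2⁻¹:ℝ) ^ ((N : ℝ) - α)) ^ j)
              = (D / 2) ^ p * (2 * D) ^ ((N : ℝ) - α) *
                (((2⁻¹:ℝ) ^ p) ^ j * ((2⁻¹:ℝ) ^ ((N : ℝ) - α)) ^ j) := by ring
            _ = (D / 2) ^ p * (2 * D) ^ ((N : ℝ) - α) * ((2⁻¹:ℝ) ^ (γ - α)) ^ j := by rw [e3]
  have := ENNReal.toReal_mono hBne hlint
  linarith [ENNReal.toReal_nonneg (a := B)]
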